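/- Let F be a field of characteristic zero, G a finite group, and A a G-graded F-algebra that is Azumaya (as an ungraded algebra) over its center Z(A). Set R = Z(A)_e = Z(A) ∩ A_e. Then for every ideal 𝔞 of the commutative ring R, one has 𝔞A ∩ R = 𝔞, where 𝔞A denotes the (two-sided) ideal of A generated by 𝔞, i.e., the set of finite sums Σ aᵢxᵢ with aᵢ ∈ 𝔞 and xᵢ ∈ A. -/

import Mathlib

open TensorProduct

noncomputable section

/-- Right multiplication as an algebra homomorphism `Aᵐᵒᵖ →ₐ[R] End R A`. -/
def rmulAlgHom (R A : Type*) [CommSemiring R] [Semiring A] [Algebra R A] :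
    Aᵐᵒᵖ →ₐ[R] Module.End R A where
  toFun a := LinearMap.mulRight R a.unop
  map_one' := by ext x; simp
  map_mul' a b := by ext x; simp [mul_assoc]
  map_zero' := by ext x; simp
  map_add' a b := by ext x; simp [mul_add]
  commutes' r := by ext x; simp [← Algebra.commutes r x, Algebra.smul_def]

/-- The natural map `A ⊗[R] Aᵐᵒᵖ →ₐ[R] End R A` induced by left and right multiplication. -/
def azumayaMap (R A : Type*) [CommRing R] [Ring A] [Algebra R A] :
    A ⊗[R] Aᵐᵒᵖ →ₐ[R] Module.End R A :=
  Algebra.TensorProduct.lift (Algebra.lmul R A) (rmulAlgHom R A)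
    (fun a b => by ext x; simp [rmulAlgHom, mul_assoc])

/-- `A` is an Azumaya algebra over the commutative ring `R`: it is a faithful finitely
generated projective `R`-module and the natural map `A ⊗[R] Aᵐᵒᵖ → End_R A` is bijective. -/
def IsAzumaya' (R A : Type*) [CommRing R] [Ring A] [Algebra R A] : Prop :=
  Module.Projective R A ∧ Module.Finite R A ∧ FaithfulSMul R A ∧
    Function.Bijective (azumayaMap R A)


section AuxGrade

open scoped DirectSum Classical

variable {F G A : Type*} [Field F] [Group G] [DecidableEq G] [Ring A] [Algebra F A]
variable (𝒜 : G → Submodule F A)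

/-- The decomposition equivalence coming from an internal direct sum. -/
noncomputable def gradeD (hint : DirectSum.IsInternal 𝒜) : A ≃+ ⨁ g, 𝒜 g :=
  (AddEquiv.ofBijective (DirectSum.coeAddMonoidHom 𝒜) hint).symm

/-- Projection onto the degree `g` component. -/
noncomputable def gradeP (hint : DirectSum.IsInternal 𝒜) (g : G) : A →+ A :=
  ((𝒜 g).subtype.toAddMonoidHom).comp
    ((DFinsupp.evalAddMonoidHom g).comp (gradeD 𝒜 hint).toAddMonoidHom)

variable (hint : DirectSum.IsInternal 𝒜)

theorem gradeP_apply (g : G) (a : A) : gradeP 𝒜 hint g a = ↑(gradeD 𝒜 hint a g) := rfl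

theorem gradeP_mem (g : G) (a : A) : gradeP 𝒜 hint g a ∈ 𝒜 g := (gradeD 𝒜 hint a g).2

theorem gradeD_of_mem {g : G} {a : A} (ha : a ∈ 𝒜 g) :
    gradeD 𝒜 hint a = DirectSum.of (fun i => 𝒜 i) g ⟨a, ha⟩ := by
  apply (gradeD 𝒜 hint).symm.injective
  rw [AddEquiv.symm_apply_apply]
  exact (DirectSum.coeAddMonoidHom_of 𝒜 g ⟨a, ha⟩).symm

theorem gradeP_of_mem {g : G} {a : A} (ha : a ∈ 𝒜 g) : gradeP 𝒜 hint g a = a := by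
  rw [gradeP_apply, gradeD_of_mem 𝒜 hint ha, DirectSum.of_eq_same]

theorem gradeP_of_mem_ne {g h : G} {a : A} (ha : a ∈ 𝒜 g) (hne : g ≠ h) :
    gradeP 𝒜 hint h a = 0 := by
  rw [gradeP_apply, gradeD_of_mem 𝒜 hint ha, DirectSum.of_eq_of_ne _ _ _ hne.symm,
    ZeroMemClass.coe_zero]

theorem gradeP_sum (a : A) :
    ∑ g ∈ (gradeD 𝒜 hint a).support, gradeP 𝒜 hint g a = a := by
  classical
  conv_rhs => rw [← (gradeD 𝒜 hint).symm_apply_apply a]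
  have h : (gradeD 𝒜 hint).symm (gradeD 𝒜 hint a)
      = DirectSum.coeAddMonoidHom 𝒜 (gradeD 𝒜 hint a) := rfl
  rw [h]
  conv_rhs => rw [← DirectSum.sum_support_of (gradeD 𝒜 hint a)]
  rw [map_sum]
  simp [gradeP_apply]

variable (hmul : ∀ g h : G, ∀ x ∈ 𝒜 g, ∀ y ∈ 𝒜 h, x * y ∈ 𝒜 (g * h))

include hmul

theorem gradeP_mul_right {h : G} (z b : A) (hb : b ∈ 𝒜 h) :
    gradeP 𝒜 hint h (z * b) = gradeP 𝒜 hint 1 z * b := by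
  classical
  conv_lhs => rw [← gradeP_sum 𝒜 hint z, Finset.sum_mul, map_sum]
  rw [Finset.sum_eq_single (1 : G)]
  · exact gradeP_of_mem 𝒜 hint
      (by simpa using hmul 1 h _ (gradeP_mem 𝒜 hint 1 z) b hb)
  · intro g _ hg
    refine gradeP_of_mem_ne 𝒜 hint (hmul g h _ (gradeP_mem 𝒜 hint g z) b hb) fun hgh => hg (by rwa [mul_eq_right] at hgh)
  · intro h1
    have : gradeP 𝒜 hint 1 z = 0 := by
      rw [gradeP_apply, DFinsupp.notMem_support_iff.mp h1, ZeroMemClass.coe_zero]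
    rw [this, zero_mul, map_zero]

theorem gradeP_mul_left {h : G} (z a : A) (ha : a ∈ 𝒜 h) :
    gradeP 𝒜 hint h (a * z) = a * gradeP 𝒜 hint 1 z := by
  classical
  conv_lhs => rw [← gradeP_sum 𝒜 hint z, Finset.mul_sum, map_sum]
  rw [Finset.sum_eq_single (1 : G)]
  · exact gradeP_of_mem 𝒜 hint
      (by simpa using hmul h 1 a ha _ (gradeP_mem 𝒜 hint 1 z))
  · intro g _ hg
    refine gradeP_of_mem_ne 𝒜 hint (hmul h g a ha _ (gradeP_mem 𝒜 hint g z)) fun hgh => hg (by rwa [mul_eq_left] at hgh)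
  · intro h1
    have : gradeP 𝒜 hint 1 z = 0 := by
      rw [gradeP_apply, DFinsupp.notMem_support_iff.mp h1, ZeroMemClass.coe_zero]
    rw [this, mul_zero, map_zero]

theorem gradeP_center {z : A} (hz : z ∈ Subring.center A) :
    gradeP 𝒜 hint 1 z ∈ Subring.center A := by
  classical
  rw [Subring.mem_center_iff]
  have key : ∀ (g : G) (c : A), c ∈ 𝒜 g →
      c * gradeP 𝒜 hint 1 z = gradeP 𝒜 hint 1 z * c := by
    intro g c hc
    rw [← gradeP_mul_left 𝒜 hint hmul z c hc, ← gradeP_mul_right 𝒜 hint hmul z c hc,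
      Subring.mem_center_iff.mp hz c]
  intro b
  conv_lhs => rw [← gradeP_sum 𝒜 hint b, Finset.sum_mul]
  conv_rhs => rw [← gradeP_sum 𝒜 hint b, Finset.mul_sum]
  exact Finset.sum_congr rfl fun g _ => key g _ (gradeP_mem 𝒜 hint g b)

end AuxGrade

/-- A faithful finitely generated projective algebra over its center admits a central
projection splitting the inclusion of the center. -/
theorem exists_central_projection {A : Type*} [Ring A]
    (hP : Module.Projective (Subring.center A) A)
    (hFin : Module.Finite (Subring.center A) A)
    (hFa : FaithfulSMul (Subring.center A) A) :
    ∃ p : A →+ Subring.center A, (∀ z : Subring.center A, p ↑z = z) ∧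
      ∀ (z : Subring.center A) (y : A), p ((z : A) * y) = z * p y := by
  classical
  obtain ⟨s, hs⟩ := Module.projective_def.mp hP
  have hs' : ∀ a : A, ((s a).sum fun y z => z • y) = a := by
    intro a
    have h := hs a
    rwa [Finsupp.linearCombination_apply] at h
  obtain ⟨n, v, hv⟩ := Module.Finite.exists_fin (R := Subring.center A) (M := A)
  set S : Set (Subring.center A) :=
    ⋃ i : Fin n, ⇑(s (v i)) '' ((s (v i)).support : Set A) with hS
  set τ : Ideal (Subring.center A) := Ideal.span S with hτ
  have hvτ : ∀ (i : Fin n) (x : A), s (v i) x ∈ τ := by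
    intro i x
    by_cases hx : x ∈ (s (v i)).support
    · exact Ideal.subset_span (Set.mem_iUnion.mpr ⟨i, Set.mem_image_of_mem _ hx⟩)
    · rw [Finsupp.notMem_support_iff.mp hx]; exact τ.zero_mem
  have hτall : ∀ (a x : A), s a x ∈ τ := by
    have hM : ∀ a ∈ Submodule.span (Subring.center A) (Set.range v), ∀ x, s a x ∈ τ := by
      intro a ha
      induction ha using Submodule.span_induction with
      | mem y hy => obtain ⟨i, rfl⟩ := hy; exact hvτ i
      | zero => intro x; rw [map_zero]; exact τ.zero_mem
      | add y z _ _ hy hz =>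
        intro x; rw [map_add, Finsupp.add_apply]; exact add_mem (hy x) (hz x)
      | smul t y _ hy =>
        intro x; rw [map_smul, Finsupp.smul_apply]; exact Submodule.smul_mem _ _ (hy x)
    exact fun a => hM a (hv ▸ Submodule.mem_top)
  have hkey : ∀ a x : A, s a x = ∑ y ∈ (s a).support, s a y * s y x := by
    intro a x
    conv_lhs => rw [← hs' a]
    rw [Finsupp.sum, map_sum, Finsupp.finset_sum_apply]
    refine Finset.sum_congr rfl fun y _ => ?_
    rw [map_smul, Finsupp.smul_apply, smul_eq_mul]
  have hττ : τ ≤ τ * τ := by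
    rw [hτ, Ideal.span_le]
    rintro z hz
    obtain ⟨i, x, rfl⟩ : ∃ i x, s (v i) x = z := by
      obtain ⟨i, x, hx, he⟩ := by simpa [hS] using hz
      exact ⟨i, x, he⟩
    rw [SetLike.mem_coe, hkey (v i) x]
    exact Ideal.sum_mem _ fun y _ => Ideal.mul_mem_mul (hτall _ _) (hτall _ _)
  have hfg : τ.FG :=
    Submodule.fg_def.mpr
      ⟨S, Set.finite_iUnion fun i => ((s (v i)).support.finite_toSet.image _), rfl⟩
  obtain ⟨rr, hrr1, hrr0⟩ :=
    Submodule.exists_sub_one_mem_and_smul_eq_zero_of_fg_of_le_smul τ τ hfg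
      (by rw [Ideal.smul_eq_mul]; exact hττ)
  have hrrA : ∀ a : A, rr • a = 0 := by
    intro a
    conv_lhs => rw [← hs' a, Finsupp.sum, Finset.smul_sum]
    refine Finset.sum_eq_zero fun x _ => ?_
    rw [smul_smul, ← smul_eq_mul, hrr0 _ (hτall a x), zero_smul]
  have hrr : rr = 0 := eq_of_smul_eq_smul fun a : A => by rw [hrrA, zero_smul]
  have h1τ : (1 : Subring.center A) ∈ τ := by
    have h2 : (-1 : Subring.center A) ∈ τ := by simpa [hrr] using hrr1
    simpa using τ.neg_mem h2
  obtain ⟨m, c, gS, hsum1⟩ := Submodule.mem_span_set'.mp h1τ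
  have hb0 : ∀ j : Fin m, ∃ y x : A, s y x = (gS j : Subring.center A) := by
    intro j
    obtain ⟨i, hmem⟩ := Set.mem_iUnion.mp (gS j).2
    obtain ⟨x, hx, he⟩ := hmem
    exact ⟨v i, x, he⟩
  choose y0 x0 hy0 using hb0
  have hsum1' : ∑ j, c j * s (y0 j) (x0 j) = 1 := by
    rw [← hsum1]
    refine Finset.sum_congr rfl fun j _ => ?_
    rw [hy0 j, smul_eq_mul]
  refine ⟨{ toFun := fun a => ∑ j, s (a * (c j • y0 j)) (x0 j)
            map_zero' := by simp
            map_add' := fun a₁ a₂ => by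
              simp [add_mul, map_add, Finsupp.add_apply, Finset.sum_add_distrib] }, ?_, ?_⟩
  · intro z
    show ∑ j, s ((z : A) * (c j • y0 j)) (x0 j) = z
    have hzs : ∀ b : A, (z : A) * b = z • b := fun _ => rfl
    simp only [hzs, map_smul, Finsupp.smul_apply, smul_eq_mul, ← Finset.mul_sum, hsum1',
      mul_one]

  · intro z y
    show ∑ j, s ((z : A) * y * (c j • y0 j)) (x0 j)
        = z * ∑ j, s (y * (c j • y0 j)) (x0 j)
    have hzs : ∀ j, (z : A) * y * (c j • y0 j) = z • (y * (c j • y0 j)) := fun j => by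
      rw [mul_assoc]; rfl
    simp only [hzs, map_smul, Finsupp.smul_apply, smul_eq_mul, Finset.mul_sum]

/-- `A` is a `G`-graded `F`-algebra (`F` a field of characteristic zero, `G` a
finite group), given by the internal grading `𝒜`, which is Azumaya (as an ungraded algebra)
over its center.  The commutative ring `R` realizes the `e`-center `Z(A)_e = Z(A) ∩ A_e`
(via the injective map `algebraMap R A` whose range is exactly the `e`-center).  Then for
every ideal `𝔞` of `R` one has `𝔞A ∩ R = 𝔞`, where `𝔞A` is the (two-sided) ideal of `A`
generated by `𝔞`. -/
theorem stmt_6 {F G A R : Type*} [Field F] [CharZero F] [Group G] [Finite G] [DecidableEq G]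
    [Ring A] [Algebra F A] [CommRing R] [Algebra R A]
    (𝒜 : G → Submodule F A)
    (hone : (1 : A) ∈ 𝒜 1)
    (hmul : ∀ g h : G, ∀ x ∈ 𝒜 g, ∀ y ∈ 𝒜 h, x * y ∈ 𝒜 (g * h))
    (hint : DirectSum.IsInternal 𝒜)
    (hAz : IsAzumaya' (Subring.center A) A)
    (hRinj : Function.Injective (algebraMap R A))
    (hRrange : Set.range (algebraMap R A) = {x : A | x ∈ Subring.center A ∧ x ∈ 𝒜 1})
    (𝔞 : Ideal R) :
    Ideal.comap (algebraMap R A) (Ideal.map (algebraMap R A) 𝔞) = 𝔞 := by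
  classical
  obtain ⟨hP, hFin, hFa, -⟩ := hAz
  obtain ⟨p, hp1, hp2⟩ := exists_central_projection hP hFin hFa
  refine le_antisymm ?_ Ideal.le_comap_map
  intro r hr
  rw [Ideal.mem_comap] at hr
  have hr' : algebraMap R A r ∈ Submodule.span A (⇑(algebraMap R A) '' ↑𝔞) := hr
  obtain ⟨n2, cc, u, hu⟩ := Submodule.mem_span_set'.mp hr'
  choose ri hri1 hri2 using fun i => (u i).2
  have hcent : ∀ x : R, algebraMap R A x ∈ Subring.center A ∧ algebraMap R A x ∈ 𝒜 1 := by
    intro x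
    have hx : algebraMap R A x ∈ Set.range (algebraMap R A) := ⟨x, rfl⟩
    rw [hRrange] at hx; exact hx
  have hu' : ∑ i, algebraMap R A (ri i) * cc i = algebraMap R A r := by
    rw [← hu]
    refine Finset.sum_congr rfl fun i _ => ?_
    rw [smul_eq_mul, ← hri2 i, Subring.mem_center_iff.mp (hcent (ri i)).1 (cc i)]
  have hz0 : (↑(p (algebraMap R A r)) : A) = algebraMap R A r :=
    congrArg Subtype.val (hp1 ⟨_, (hcent r).1⟩)
  have hpx : (↑(p (algebraMap R A r)) : A) = ∑ i, algebraMap R A (ri i) * ↑(p (cc i)) := by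
    rw [← hu', map_sum, AddSubmonoidClass.coe_finset_sum]
    refine Finset.sum_congr rfl fun i _ => ?_
    have h2 := hp2 ⟨algebraMap R A (ri i), (hcent (ri i)).1⟩ (cc i)
    rw [show algebraMap R A (ri i) * cc i
        = (↑(⟨algebraMap R A (ri i), (hcent (ri i)).1⟩ : Subring.center A) : A) * cc i from rfl,
      h2]
    rfl
  have hfr1 : gradeP 𝒜 hint 1 (algebraMap R A r) = algebraMap R A r :=
    gradeP_of_mem 𝒜 hint (hcent r).2
  have hfin : algebraMap R A r = ∑ i, algebraMap R A (ri i) * gradeP 𝒜 hint 1 ↑(p (cc i)) := by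
    conv_lhs => rw [← hfr1, ← hz0, hpx]
    rw [map_sum]
    exact Finset.sum_congr rfl fun i _ => gradeP_mul_left 𝒜 hint hmul _ _ (hcent (ri i)).2
  have hrange : ∀ i, ∃ ρ : R, algebraMap R A ρ = gradeP 𝒜 hint 1 ↑(p (cc i)) := by
    intro i
    have h1 : gradeP 𝒜 hint 1 ↑(p (cc i)) ∈ Subring.center A :=
      gradeP_center 𝒜 hint hmul (p (cc i)).2
    have h2 : gradeP 𝒜 hint 1 (↑(p (cc i)) : A) ∈ 𝒜 1 := gradeP_mem 𝒜 hint 1 _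
    have h3 : gradeP 𝒜 hint 1 (↑(p (cc i)) : A) ∈ Set.range (algebraMap R A) := by
      rw [hRrange]; exact ⟨h1, h2⟩
    exact h3
  choose ρ hρ using hrange
  have hfinal : algebraMap R A r = algebraMap R A (∑ i, ri i * ρ i) := by
    rw [map_sum, hfin]
    exact Finset.sum_congr rfl fun i _ => by rw [map_mul, hρ i]
  rw [hRinj hfinal]
  exact Ideal.sum_mem _ fun i _ => Ideal.mul_mem_right _ _ (hri1 i)

end
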